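/- (Helly-type selection principle.) Let X be a real Banach space, D : X × X → [0,∞] a map satisfying the triangle inequality, the coercivity D(z0,z1) ≥ c_D‖z1 − z0‖ with c_D > 0, and sequential weak lower semicontinuity (z_j ⇀ z, ẑ_j ⇀ ẑ imply D(z,ẑ) ≤ liminf_j D(z_j,ẑ_j)). Let K ⊂ X be sequentially weakly compact and let z^(l) : [0,T] → K, l ∈ ℕ, be a sequence of curves with sup_l Diss_D(z^(l); [0,T]) ≤ C < ∞. Then there exist a subsequence (l_n) and a curve z^(∞) : [0,T] → X such that z^(l_n)(t) ⇀ z^(∞)(t) weakly in X for every t ∈ [0,T], and Diss_D(z^(∞); [0,T]) ≤ liminf_{n→∞} Diss_D(z^(l_n); [0,T]). -/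

import Mathlib

open Filter Topology Set MeasureTheory
open scoped ENNReal

noncomputable section

/-- Weak convergence of a sequence in a normed space: convergence against every
continuous linear functional. -/
def WeakConv {X : Type*} [NormedAddCommGroup X] [NormedSpace ℝ X]
    (u : ℕ → X) (z : X) : Prop :=
  ∀ f : X →L[ℝ] ℝ, Tendsto (fun n => f (u n)) atTop (𝓝 (f z))

/-- A set is sequentially weakly compact if every sequence in it has a subsequence
converging weakly to a point of the set. -/
def SeqWeaklyCompact {X : Type*} [NormedAddCommGroup X] [NormedSpace ℝ X]
    (S : Set X) : Prop :=
  ∀ u : ℕ → X, (∀ n, u n ∈ S) →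
    ∃ z ∈ S, ∃ φ : ℕ → ℕ, StrictMono φ ∧ WeakConv (fun n => u (φ n)) z

/-- The dissipation of the curve `z` on the interval `[s,t]`, defined as the supremum
over all finite partitions `s = τ₀ < τ₁ < … < τ_N = t` of `∑ⱼ D (z τⱼ₋₁) (z τⱼ)`. -/
def Diss {X : Type*} (D : X → X → ℝ≥0∞) (z : ℝ → X) (s t : ℝ) : ℝ≥0∞ :=
  ⨆ (N : ℕ) (τ : ℕ → ℝ) (_ : τ 0 = s) (_ : τ N = t)
    (_ : ∀ j < N, τ j < τ (j + 1)),
    ∑ j ∈ Finset.range N, D (z (τ j)) (z (τ (j + 1)))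

/-- A partition of the interval `[s,t]`. -/
structure HellyPtn (s t : ℝ) where
  N : ℕ
  τ : ℕ → ℝ
  h0 : τ 0 = s
  hN : τ N = t
  hlt : ∀ j < N, τ j < τ (j + 1)

def HellyPtn.sum {X : Type*} (D : X → X → ℝ≥0∞) (z : ℝ → X) {s t : ℝ}
    (p : HellyPtn s t) : ℝ≥0∞ :=
  ∑ j ∈ Finset.range p.N, D (z (p.τ j)) (z (p.τ (j + 1)))

lemma hellyPtn_sum_le_diss {X : Type*} (D : X → X → ℝ≥0∞) (z : ℝ → X) {s t : ℝ}
    (p : HellyPtn s t) : p.sum D z ≤ Diss D z s t := by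
  unfold Diss
  exact le_iSup_of_le p.N <| le_iSup_of_le p.τ <| le_iSup_of_le p.h0 <|
    le_iSup_of_le p.hN <| le_iSup_of_le p.hlt le_rfl

lemma diss_eq {X : Type*} (D : X → X → ℝ≥0∞) (z : ℝ → X) (s t : ℝ) :
    Diss D z s t = ⨆ p : HellyPtn s t, p.sum D z := by
  apply le_antisymm
  · refine iSup_le fun N => iSup_le fun τ => iSup_le fun h0 => iSup_le fun hN =>
      iSup_le fun hlt => ?_
    exact le_iSup (fun p : HellyPtn s t => p.sum D z) ⟨N, τ, h0, hN, hlt⟩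
  · exact iSup_le fun p => hellyPtn_sum_le_diss D z p

def hellyPtnOfLe {s t : ℝ} (h : s ≤ t) : HellyPtn s t := by
  by_cases he : s = t
  · exact ⟨0, fun _ => s, rfl, he ▸ rfl, fun j hj => absurd hj (Nat.not_lt_zero j)⟩
  · refine ⟨1, fun j => if j = 0 then s else t, by simp, by simp, ?_⟩
    intro j hj
    interval_cases j
    simpa using lt_of_le_of_ne h he

lemma hellyPtn_tau_mono {s t : ℝ} (p : HellyPtn s t) {i j : ℕ} (hij : i ≤ j) (hj : j ≤ p.N) :
    p.τ i ≤ p.τ j := by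
  induction j with
  | zero =>
    have : i = 0 := by omega
    subst this; exact le_rfl
  | succ j ih =>
    by_cases hij' : i = j + 1
    · subst hij'; exact le_rfl
    · exact (ih (by omega) (by omega)).trans (p.hlt j (by omega)).le

lemma hellyPtn_tau_mem {s t : ℝ} (p : HellyPtn s t) {j : ℕ} (hj : j ≤ p.N) :
    p.τ j ∈ Icc s t := by
  constructor
  · have := hellyPtn_tau_mono p (Nat.zero_le j) hj
    rwa [p.h0] at this
  · have := hellyPtn_tau_mono p hj le_rfl
    rwa [p.hN] at this

lemma diss_superadd {X : Type*} (D : X → X → ℝ≥0∞) (z : ℝ → X) {s a b : ℝ}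
    (h1 : s ≤ a) (h2 : a < b) :
    Diss D z s a + D (z a) (z b) ≤ Diss D z s b := by
  rw [diss_eq D z s a]
  haveI : Nonempty (HellyPtn s a) := ⟨hellyPtnOfLe h1⟩
  rw [ENNReal.iSup_add]
  refine iSup_le fun p => ?_
  set τ' : ℕ → ℝ := fun j => if j ≤ p.N then p.τ j else b with hτ'
  have hm : ∀ j < p.N + 1, τ' j < τ' (j + 1) := by
    intro j hj
    rcases Nat.lt_succ_iff_lt_or_eq.mp hj with h | h
    · have e1 : τ' j = p.τ j := if_pos (by omega)
      have e2 : τ' (j + 1) = p.τ (j + 1) := if_pos (by omega)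
      rw [e1, e2]; exact p.hlt j h
    · have e1 : τ' j = p.τ j := if_pos (by omega)
      have e2 : τ' (j + 1) = b := if_neg (by omega)
      rw [e1, e2, h, p.hN]; exact h2
  have h0' : τ' 0 = s := by
    have : τ' 0 = p.τ 0 := if_pos (by omega)
    rw [this, p.h0]
  have hN' : τ' (p.N + 1) = b := if_neg (by omega)
  set p' : HellyPtn s b := ⟨p.N + 1, τ', h0', hN', hm⟩ with hpd
  have hsum : p'.sum D z = p.sum D z + D (z a) (z b) := by
    show (∑ j ∈ Finset.range (p.N + 1), D (z (τ' j)) (z (τ' (j + 1)))) = _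
    rw [Finset.sum_range_succ]
    congr 1
    · refine Finset.sum_congr rfl fun j hj => ?_
      have hj' := Finset.mem_range.mp hj
      rw [show τ' j = p.τ j from if_pos (by omega), show τ' (j+1) = p.τ (j+1) from if_pos (by omega)]
    · rw [show τ' p.N = p.τ p.N from if_pos le_rfl, show τ' (p.N+1) = b from if_neg (by omega), p.hN]
  calc p.sum D z + D (z a) (z b) = p'.sum D z := hsum.symm
  _ ≤ Diss D z s b := hellyPtn_sum_le_diss D z p'

lemma diss_mono {X : Type*} (D : X → X → ℝ≥0∞) (z : ℝ → X) {s a b : ℝ}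
    (h1 : s ≤ a) (h2 : a ≤ b) : Diss D z s a ≤ Diss D z s b := by
  rcases eq_or_lt_of_le h2 with he | hlt
  · rw [he]
  · exact (le_add_right le_rfl).trans (diss_superadd D z h1 hlt)

lemma ennreal_le_liminf_add (u v : ℕ → ℝ≥0∞) :
    liminf u atTop + liminf v atTop ≤ liminf (fun n => u n + v n) atTop := by
  rw [liminf_eq_iSup_iInf_of_nat, liminf_eq_iSup_iInf_of_nat, liminf_eq_iSup_iInf_of_nat,
    ENNReal.iSup_add_iSup_of_monotone (f := fun n => ⨅ i ≥ n, u i) (g := fun n => ⨅ i ≥ n, v i)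
      (fun n m h => le_iInf₂ fun i hi => iInf₂_le i (le_trans h hi))
      (fun n m h => le_iInf₂ fun i hi => iInf₂_le i (le_trans h hi))]
  exact iSup_mono fun n => le_iInf₂ fun i hi =>
    add_le_add (iInf₂_le i hi) (iInf₂_le i hi)

lemma ennreal_sum_liminf_le {ι : Type*} (s : Finset ι) (f : ι → ℕ → ℝ≥0∞) :
    (∑ j ∈ s, liminf (f j) atTop) ≤ liminf (fun n => ∑ j ∈ s, f j n) atTop := by
  classical
  induction s using Finset.induction with
  | empty => simp
  | insert _ _ hns ih =>
    rename_i a s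
    rw [Finset.sum_insert hns]
    refine le_trans (add_le_add_right ih _) ?_
    refine (ennreal_le_liminf_add (f a) (fun n => ∑ j ∈ s, f j n)).trans ?_
    refine le_of_eq ?_
    congr 1
    funext n
    rw [Finset.sum_insert hns]

lemma helly_diagonal {β : Type*} (Conv : (ℕ → β) → β → Prop)
    (hsub : ∀ (u : ℕ → β) (x : β) (ψ : ℕ → ℕ), StrictMono ψ → Conv u x →
      Conv (fun n => u (ψ n)) x)
    (hshift : ∀ (u : ℕ → β) (x : β) (k : ℕ), Conv (fun n => u (n + k)) x → Conv u x)
    (Kk : ℕ → Set β)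
    (hcpt : ∀ k (u : ℕ → β), (∀ n, u n ∈ Kk k) →
      ∃ ψ : ℕ → ℕ, StrictMono ψ ∧ ∃ x ∈ Kk k, Conv (fun n => u (ψ n)) x)
    (F : ℕ → ℕ → β) (hF : ∀ k n, F k n ∈ Kk k) :
    ∃ φ : ℕ → ℕ, StrictMono φ ∧ ∀ k, ∃ x ∈ Kk k, Conv (fun n => F k (φ n)) x := by
  classical
  let Ψ : ℕ → (ℕ → ℕ) → (ℕ → ℕ) := fun k Ek =>
    Classical.choose (hcpt (k+1) (fun n => F (k+1) (Ek n)) (fun n => hF _ _))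
  let E : ℕ → ℕ → ℕ := fun k =>
    Nat.rec (Classical.choose (hcpt 0 (F 0) (hF 0))) (fun k Ek n => Ek (Ψ k Ek n)) k
  have hE0 : E 0 = Classical.choose (hcpt 0 (F 0) (hF 0)) := rfl
  have hEs : ∀ k, E (k + 1) = fun n => E k (Ψ k (E k) n) := fun k => rfl
  have hΨ : ∀ k, StrictMono (Ψ k (E k)) ∧
      ∃ x ∈ Kk (k+1), Conv (fun n => F (k+1) (E k (Ψ k (E k) n))) x := fun k =>
    Classical.choose_spec (hcpt (k+1) (fun n => F (k+1) (E k n)) (fun n => hF _ _))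
  have hSM : ∀ k, StrictMono (E k) ∧ ∃ x ∈ Kk k, Conv (fun n => F k (E k n)) x := by
    intro k
    induction k with
    | zero => exact Classical.choose_spec (hcpt 0 (F 0) (hF 0))
    | succ k ih =>
      obtain ⟨hmono, x, hx, hconv⟩ := hΨ k
      exact ⟨ih.1.comp hmono, x, hx, hconv⟩
  have hrange : ∀ k j, ∃ g : ℕ → ℕ, E (k + j) = fun n => E k (g n) := by
    intro k j
    induction j with
    | zero => exact ⟨id, rfl⟩
    | succ j ih =>
      obtain ⟨g, hg⟩ := ih
      refine ⟨fun n => g (Ψ (k+j) (E (k+j)) n), ?_⟩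
      funext n
      show E (k + j + 1) n = E k (g (Ψ (k + j) (E (k + j)) n))
      rw [hEs (k + j)]
      simp only [hg]
  set φ : ℕ → ℕ := fun n => E n n with hφdef
  have hφ : StrictMono φ := by
    apply strictMono_nat_of_lt_succ
    intro n
    have h1 : φ (n+1) = E n (Ψ n (E n) (n+1)) := rfl
    rw [h1]
    exact (hSM n).1 (lt_of_lt_of_le (Nat.lt_succ_self n) ((hΨ n).1.le_apply))
  refine ⟨φ, hφ, fun k => ?_⟩
  obtain ⟨x, hxK, hconv⟩ := (hSM k).2
  refine ⟨x, hxK, hshift _ x k ?_⟩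
  have hrep : ∀ n : ℕ, ∃ m, φ (n + k) = E k m := by
    intro n
    obtain ⟨g, hg⟩ := hrange k n
    refine ⟨g (n + k), ?_⟩
    have : φ (n + k) = E (n + k) (n + k) := rfl
    rw [this, show n + k = k + n from Nat.add_comm n k, hg]
  set m : ℕ → ℕ := fun n => Classical.choose (hrep n) with hmdef
  have hm : ∀ n, φ (n + k) = E k (m n) := fun n => Classical.choose_spec (hrep n)
  have hmmono : StrictMono m := by
    intro a b hab
    have h1 : E k (m a) < E k (m b) := by
      rw [← hm a, ← hm b]
      exact hφ (by omega)
    exact (hSM k).1.lt_iff_lt.mp h1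
  have heq : (fun n => F k (φ (n + k))) = fun n => F k (E k (m n)) := by
    funext n; rw [hm n]
  rw [heq]
  exact hsub _ x m hmmono hconv


lemma weakConv_subseq {X : Type*} [NormedAddCommGroup X] [NormedSpace ℝ X]
    {u : ℕ → X} {x : X} {ψ : ℕ → ℕ} (hψ : StrictMono ψ) (h : WeakConv u x) :
    WeakConv (fun n => u (ψ n)) x :=
  fun f => (h f).comp hψ.tendsto_atTop

lemma weakConv_shift {X : Type*} [NormedAddCommGroup X] [NormedSpace ℝ X]
    {u : ℕ → X} {x : X} (k : ℕ) (h : WeakConv (fun n => u (n + k)) x) :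
    WeakConv u x :=
  fun f => (tendsto_add_atTop_iff_nat k).mp (h f)

/-- Helly-type selection principle: a sequence of curves with values in a sequentially weakly
compact set and uniformly bounded dissipation has a pointwise weakly convergent subsequence,
and the dissipation is sequentially weakly lower semicontinuous along it. -/
theorem helly_selection_principle
    {X : Type*} [NormedAddCommGroup X] [NormedSpace ℝ X] [CompleteSpace X]
    (T cD : ℝ) (hT : 0 < T) (hcD : 0 < cD)
    (D : X → X → ℝ≥0∞)
    (hDtri : ∀ z1 z2 z3 : X, D z1 z3 ≤ D z1 z2 + D z2 z3)
    (hDcoer : ∀ z0 z1 : X, ENNReal.ofReal (cD * ‖z1 - z0‖) ≤ D z0 z1)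
    (hDlsc : ∀ (u v : ℕ → X) (z w : X), WeakConv u z → WeakConv v w →
      D z w ≤ liminf (fun j => D (u j) (v j)) atTop)
    (K : Set X) (hK : SeqWeaklyCompact K)
    (zl : ℕ → ℝ → X) (hzlK : ∀ l : ℕ, ∀ s ∈ Icc (0:ℝ) T, zl l s ∈ K)
    (C : ℝ≥0∞) (hC : C ≠ ⊤) (hDiss : ∀ l : ℕ, Diss D (zl l) 0 T ≤ C) :
    ∃ φ : ℕ → ℕ, StrictMono φ ∧ ∃ zinf : ℝ → X,
      (∀ s ∈ Icc (0:ℝ) T, WeakConv (fun n => zl (φ n) s) (zinf s)) ∧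
      Diss D zinf 0 T ≤ liminf (fun n => Diss D (zl (φ n)) 0 T) atTop := by
  classical
  have hT0 : (0:ℝ) ≤ T := hT.le
  -- countable dense subset of [0,T] containing 0 and T
  set Q : Set ℝ := {x | x ∈ Icc (0:ℝ) T ∧ ∃ r : ℚ, (r:ℝ) = x} ∪ {0, T} with hQdef
  have hQc : Q.Countable := by
    apply Set.Countable.union
    · exact Set.Countable.mono (fun x hx => hx.2) (countable_range ((↑) : ℚ → ℝ))
    · exact ((Set.finite_singleton T).insert 0).countable
  have hQicc : Q ⊆ Icc (0:ℝ) T := by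
    rintro x (hx | hx)
    · exact hx.1
    · rcases hx with rfl | rfl
      · exact ⟨le_rfl, hT0⟩
      · exact ⟨hT0, le_rfl⟩
  obtain ⟨q, hq⟩ := hQc.exists_eq_range ⟨0, Or.inr (Or.inl rfl)⟩
  have hqmem : ∀ k, q k ∈ Icc (0:ℝ) T := fun k => hQicc (hq ▸ mem_range_self k)
  have hq0 : ∃ k0, q k0 = 0 := by
    have h0 : (0:ℝ) ∈ Q := Or.inr (Or.inl rfl)
    rw [hq] at h0; obtain ⟨k, hk⟩ := h0; exact ⟨k, hk⟩
  have hqT : ∃ kT, q kT = T := by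
    have h0 : T ∈ Q := Or.inr (Or.inr rfl)
    rw [hq] at h0; obtain ⟨k, hk⟩ := h0; exact ⟨k, hk⟩
  have hqdense : ∀ a b : ℝ, 0 ≤ a → b ≤ T → a < b → ∃ k, a < q k ∧ q k < b := by
    intro a b ha hb hab
    obtain ⟨r, hr1, hr2⟩ := exists_rat_btwn hab
    have hrQ : (r:ℝ) ∈ Q := Or.inl ⟨⟨ha.trans hr1.le, hr2.le.trans hb⟩, r, rfl⟩
    rw [hq] at hrQ
    obtain ⟨k, hk⟩ := hrQ
    exact ⟨k, hk ▸ hr1, hk ▸ hr2⟩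
  -- dissipation functionals
  set δ : ℕ → ℝ → ℝ≥0∞ := fun l t => Diss D (zl l) 0 t with hδdef
  have hδmono : ∀ (l : ℕ) (a b : ℝ), 0 ≤ a → a ≤ b → δ l a ≤ δ l b :=
    fun l a b ha hab => diss_mono D (zl l) ha hab
  have hδle : ∀ l : ℕ, ∀ t ∈ Icc (0:ℝ) T, δ l t ≤ C :=
    fun l t ht => (hδmono l t T ht.1 ht.2).trans (hDiss l)
  -- Stage 1: diagonal extraction along q, for values and dissipations simultaneously
  set Conv1 : (ℕ → X × ℝ≥0∞) → X × ℝ≥0∞ → Prop := fun u p =>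
    WeakConv (fun n => (u n).1) p.1 ∧ Tendsto (fun n => (u n).2) atTop (𝓝 p.2) with hConv1
  obtain ⟨φ1, hφ1, H1⟩ := helly_diagonal Conv1
    (by
      rintro u x ψ hψ ⟨h1, h2⟩
      exact ⟨weakConv_subseq hψ h1, h2.comp hψ.tendsto_atTop⟩)
    (by
      rintro u x k ⟨h1, h2⟩
      exact ⟨weakConv_shift k h1, (tendsto_add_atTop_iff_nat k).mp h2⟩)
    (fun _ => K ×ˢ (univ : Set ℝ≥0∞))
    (by
      intro k u hu
      obtain ⟨x, hxK, ψ1, hψ1, hwc⟩ := hK (fun n => (u n).1) (fun n => (hu n).1)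
      obtain ⟨a, ψ2, hψ2, ha⟩ := CompactSpace.tendsto_subseq (fun n => (u (ψ1 n)).2)
      refine ⟨ψ1 ∘ ψ2, hψ1.comp hψ2, (x, a), ⟨hxK, mem_univ a⟩, ?_, ?_⟩
      · exact weakConv_subseq hψ2 hwc
      · exact ha)
    (fun k n => (zl n (q k), δ n (q k)))
    (fun k n => ⟨hzlK n _ (hqmem k), mem_univ _⟩)
  choose p hpmem hp using H1
  set w : ℕ → X := fun k => (p k).1 with hwdef
  set d : ℕ → ℝ≥0∞ := fun k => (p k).2 with hddef
  have hwc1 : ∀ k, WeakConv (fun n => zl (φ1 n) (q k)) (w k) := fun k => (hp k).1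
  have hd1 : ∀ k, Tendsto (fun n => δ (φ1 n) (q k)) atTop (𝓝 (d k)) := fun k => (hp k).2
  have hdC : ∀ k, d k ≤ C :=
    fun k => le_of_tendsto (hd1 k) (Eventually.of_forall fun n => hδle _ _ (hqmem k))
  have hdmono : ∀ k m, q k ≤ q m → d k ≤ d m := fun k m h =>
    le_of_tendsto_of_tendsto' (hd1 k) (hd1 m) (fun n => hδmono _ _ _ (hqmem k).1 h)
  -- the monotone "limit" bounds and the jump set
  set A : ℝ → ℝ≥0∞ := fun t => ⨆ k, ⨆ (_ : q k < t), d k with hAdef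
  set B : ℝ → ℝ≥0∞ := fun t => ⨅ k, ⨅ (_ : t < q k), d k with hBdef
  have hAB : ∀ t, A t ≤ B t := fun t =>
    iSup₂_le fun k hk => le_iInf₂ fun m hm => hdmono k m (le_of_lt (hk.trans hm))
  have hAC : ∀ t, A t ≤ C := fun t => iSup₂_le fun k _ => hdC k
  have hBC : ∀ t, t < T → B t ≤ C := by
    intro t ht
    obtain ⟨kT, hkT⟩ := hqT
    exact (iInf₂_le kT (by rw [hkT]; exact ht)).trans (hdC kT)
  set J : Set ℝ := {t | t ∈ Ioo (0:ℝ) T ∧ A t < B t} with hJdef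
  have hJc : J.Countable := by
    obtain ⟨Q', hQ'c, hQ'd⟩ := TopologicalSpace.exists_countable_dense ℝ≥0∞
    have hsep : ∀ t : J, ∃ y : ℝ≥0∞, y ∈ Q' ∧ y ∈ Ioo (A t.1) (B t.1) := by
      rintro ⟨t, ht⟩
      obtain ⟨y, hy1, hy2⟩ := hQ'd.exists_mem_open isOpen_Ioo (nonempty_Ioo.mpr ht.2)
      exact ⟨y, hy1, hy2⟩
    choose e he1 he2 using hsep
    have hinj : Function.Injective e := by
      intro t1 t2 h12
      by_contra hne
      have hlt : ∀ s1 s2 : J, s1.1 < s2.1 → e s1 < e s2 := by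
        rintro ⟨s1, hs1⟩ ⟨s2, hs2⟩ h
        obtain ⟨k, hk1, hk2⟩ := hqdense s1 s2 hs1.1.1.le hs2.1.2.le h
        have h1 : B s1 ≤ d k := iInf₂_le k hk1
        have h2 : d k ≤ A s2 := le_iSup₂ (f := fun k (_ : q k < s2) => d k) k hk2
        calc e ⟨s1, hs1⟩ < B s1 := (he2 ⟨s1, hs1⟩).2
        _ ≤ A s2 := h1.trans h2
        _ < e ⟨s2, hs2⟩ := (he2 ⟨s2, hs2⟩).1
      have hne' : t1.1 ≠ t2.1 := fun h => hne (Subtype.ext h)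
      rcases lt_or_gt_of_ne hne' with h | h
      · exact absurd h12 (hlt t1 t2 h).ne
      · exact absurd h12.symm (hlt t2 t1 h).ne
    haveI : Countable Q' := hQ'c.to_subtype
    have : Countable J := by
      have hinj' : Function.Injective (fun t : J => (⟨e t, (he1 t)⟩ : Q')) :=
        fun a b h => hinj (congrArg Subtype.val h)
      exact Function.Injective.countable hinj'
    exact Set.countable_coe_iff.mp this
  -- Stage 2: diagonal extraction along J ∪ {0}
  have hJ'c : (J ∪ {0} : Set ℝ).Countable := hJc.union (countable_singleton 0)
  obtain ⟨r, hr⟩ := hJ'c.exists_eq_range ⟨0, Or.inr rfl⟩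
  have hrmem : ∀ k, r k ∈ Icc (0:ℝ) T := by
    intro k
    have : r k ∈ J ∪ {0} := hr ▸ mem_range_self k
    rcases this with h | h
    · exact ⟨h.1.1.le, h.1.2.le⟩
    · rw [h]; exact ⟨le_rfl, hT0⟩
  obtain ⟨φ2, hφ2, H2⟩ := helly_diagonal (fun (u : ℕ → X) (x : X) => WeakConv u x)
    (fun u x ψ hψ h => weakConv_subseq hψ h)
    (fun u x k h => weakConv_shift k h)
    (fun _ => K)
    (by
      intro k u hu
      obtain ⟨x, hxK, ψ, hψ, hwc⟩ := hK u hu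
      exact ⟨ψ, hψ, x, hxK, hwc⟩)
    (fun k n => zl (φ1 n) (r k))
    (fun k n => hzlK _ _ (hrmem k))
  set φ : ℕ → ℕ := fun n => φ1 (φ2 n) with hφdef
  have hφ : StrictMono φ := hφ1.comp hφ2
  have hwφ : ∀ k, WeakConv (fun n => zl (φ n) (q k)) (w k) := fun k =>
    weakConv_subseq hφ2 (hwc1 k)
  have hdφ : ∀ k, Tendsto (fun n => δ (φ n) (q k)) atTop (𝓝 (d k)) := fun k =>
    (hd1 k).comp hφ2.tendsto_atTop
  -- the main pointwise weak-convergence claim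
  have main : ∀ t ∈ Icc (0:ℝ) T, ∃ x, WeakConv (fun n => zl (φ n) t) x := by
    intro t ht
    by_cases htq : ∃ k, q k = t
    · obtain ⟨k, rfl⟩ := htq
      exact ⟨w k, hwφ k⟩
    by_cases htJ : t ∈ J ∪ ({0} : Set ℝ)
    · rw [hr] at htJ
      obtain ⟨k, hk⟩ := htJ
      obtain ⟨x, hxK, hx⟩ := H2 k
      exact ⟨x, hk ▸ hx⟩
    · -- continuity point
      have ht0 : 0 < t := by
        rcases ht.1.eq_or_lt with h | h
        · exact absurd (Or.inr (h.symm : t ∈ ({0} : Set ℝ))) htJ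
        · exact h
      have htT : t < T := by
        rcases ht.2.eq_or_lt with h | h
        · obtain ⟨kT, hkT⟩ := hqT
          exact absurd ⟨kT, by rw [hkT, h]⟩ htq
        · exact h
      have hABt : B t ≤ A t := not_lt.mp fun h => htJ (Or.inl ⟨⟨ht0, htT⟩, h⟩)
      have hnear : ∀ ε : ℝ, 0 < ε → ∃ k1, q k1 < t ∧
          ∀ᶠ n in atTop, ‖zl (φ n) t - zl (φ n) (q k1)‖ < ε := by
        intro ε hε
        set ε' : ℝ≥0∞ := ENNReal.ofReal (cD * ε / 3) with hε'def
        have hε'0 : ε' ≠ 0 := by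
          rw [hε'def, Ne, ENNReal.ofReal_eq_zero, not_le]
          positivity
        have hε'top : ε' ≠ ⊤ := ENNReal.ofReal_ne_top
        have hCtop : C < ⊤ := lt_top_iff_ne_top.mpr hC
        -- pick k1 below t with d k1 close to A t
        obtain ⟨k1, hk1t, hk1d⟩ : ∃ k1, q k1 < t ∧ A t ≤ d k1 + ε' := by
          rcases eq_or_ne (A t - ε') 0 with h0 | hne
          · obtain ⟨k0, hk0⟩ := hq0
            refine ⟨k0, by rw [hk0]; exact ht0, ?_⟩
            have hA : A t ≤ ε' := tsub_eq_zero_iff_le.mp h0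
            exact hA.trans le_add_self
          · have hA0 : A t ≠ 0 := by
              intro h; exact hne (by rw [h, zero_tsub])
            have hlt : A t - ε' < A t :=
              ENNReal.sub_lt_self (((hAC t).trans_lt hCtop).ne) hA0 hε'0
            rw [hAdef] at hlt
            simp only [lt_iSup_iff] at hlt
            obtain ⟨k1, hk1, hd1'⟩ := hlt
            exact ⟨k1, hk1, tsub_le_iff_right.mp hd1'.le⟩
        -- pick k2 above t with d k2 close to B t
        obtain ⟨k2, hk2t, hk2d⟩ : ∃ k2, t < q k2 ∧ d k2 ≤ B t + ε' := by
          have hBtop : B t ≠ ⊤ := ((hBC t htT).trans_lt hCtop).ne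
          have hlt : B t < B t + ε' := ENNReal.lt_add_right hBtop hε'0
          conv at hlt => lhs; rw [hBdef]
          simp only [iInf_lt_iff] at hlt
          obtain ⟨k2, hk2, hd2'⟩ := hlt
          exact ⟨k2, hk2, hd2'.le⟩
        have hdd : d k2 - d k1 ≤ 2 * ε' := by
          have h1 : d k2 ≤ d k1 + 2 * ε' := by
            calc d k2 ≤ B t + ε' := hk2d
            _ ≤ A t + ε' := add_le_add_left (hABt) _
            _ ≤ (d k1 + ε') + ε' := by gcongr
            _ = d k1 + 2 * ε' := by rw [add_assoc, two_mul]
          exact tsub_le_iff_right.mpr (by rwa [add_comm (2*ε')])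
        have htendsub : Tendsto (fun n => δ (φ n) (q k2) - δ (φ n) (q k1)) atTop
            (𝓝 (d k2 - d k1)) :=
          ENNReal.Tendsto.sub (hdφ k2) (hdφ k1) (Or.inl ((hdC k2).trans_lt hCtop).ne)
        have hevent : ∀ᶠ n in atTop, δ (φ n) (q k2) - δ (φ n) (q k1) < 3 * ε' := by
          apply htendsub.eventually_lt_const
          calc d k2 - d k1 ≤ 2 * ε' := hdd
          _ < 3 * ε' := by
            rw [mul_comm (2:ℝ≥0∞) ε', mul_comm (3:ℝ≥0∞) ε']; apply ENNReal.mul_lt_mul_right hε'0 hε'top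
            norm_num
        refine ⟨k1, hk1t, ?_⟩
        filter_upwards [hevent] with n hn
        have hsup : δ (φ n) (q k1) + D (zl (φ n) (q k1)) (zl (φ n) t) ≤ δ (φ n) t :=
          diss_superadd D (zl (φ n)) (hqmem k1).1 hk1t
        have h2 : δ (φ n) t ≤ δ (φ n) (q k2) := hδmono _ _ _ ht.1 hk2t.le
        have h1 : D (zl (φ n) (q k1)) (zl (φ n) t) ≤ δ (φ n) (q k2) - δ (φ n) (q k1) :=
          ENNReal.le_sub_of_add_le_left ((hδle _ _ (hqmem k1)).trans_lt hCtop).ne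
            (hsup.trans h2)
        have h3 : ENNReal.ofReal (cD * ‖zl (φ n) t - zl (φ n) (q k1)‖) < 3 * ε' :=
          ((hDcoer _ _).trans h1).trans_lt hn
        have h4 : 3 * ε' = ENNReal.ofReal (cD * ε) := by
          rw [hε'def, show (3:ℝ≥0∞) = ENNReal.ofReal 3 by norm_num,
            ← ENNReal.ofReal_mul (by norm_num : (0:ℝ) ≤ 3)]
          congr 1
          ring
        rw [h4] at h3
        have h5 : cD * ‖zl (φ n) t - zl (φ n) (q k1)‖ < cD * ε :=
          (ENNReal.ofReal_lt_ofReal_iff_of_nonneg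
            (mul_nonneg hcD.le (norm_nonneg _))).mp h3
        exact lt_of_mul_lt_mul_left h5 hcD.le
      -- weak limit of a subsequence
      obtain ⟨x, hxK, ψ, hψ, hxconv⟩ := hK (fun n => zl (φ n) t) (fun n => hzlK _ _ ht)
      refine ⟨x, fun f => ?_⟩
      have hcauchy : CauchySeq (fun n => f (zl (φ n) t)) := by
        rw [Metric.cauchySeq_iff]
        intro ε hε
        set ε1 : ℝ := ε / (4 * (‖f‖ + 1)) with hε1def
        have hf1 : (0:ℝ) < ‖f‖ + 1 := by positivity
        have hε1pos : 0 < ε1 := by positivity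
        obtain ⟨k1, hk1t, hk1ev⟩ := hnear ε1 hε1pos
        have hfc : CauchySeq (fun n => f (zl (φ n) (q k1))) := ((hwφ k1) f).cauchySeq
        rw [Metric.cauchySeq_iff] at hfc
        obtain ⟨N1, hN1⟩ := hfc (ε/2) (by positivity)
        obtain ⟨N2, hN2⟩ := eventually_atTop.mp hk1ev
        refine ⟨max N1 N2, fun m hm n hn => ?_⟩
        have key : ∀ j, N2 ≤ j → |f (zl (φ j) t) - f (zl (φ j) (q k1))| ≤ ε/4 := by
          intro j hj
          have hb : |f (zl (φ j) t) - f (zl (φ j) (q k1))| ≤ ‖f‖ * ε1 := by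
            calc |f (zl (φ j) t) - f (zl (φ j) (q k1))|
                = |f (zl (φ j) t - zl (φ j) (q k1))| := by rw [map_sub]
            _ = ‖f (zl (φ j) t - zl (φ j) (q k1))‖ := (Real.norm_eq_abs _).symm
            _ ≤ ‖f‖ * ‖zl (φ j) t - zl (φ j) (q k1)‖ := f.le_opNorm _
            _ ≤ ‖f‖ * ε1 := mul_le_mul_of_nonneg_left (hN2 j hj).le (norm_nonneg f)
          refine hb.trans ?_
          rw [hε1def]
          calc ‖f‖ * (ε / (4 * (‖f‖ + 1))) ≤ (‖f‖ + 1) * (ε / (4 * (‖f‖ + 1))) := by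
                apply mul_le_mul_of_nonneg_right (by linarith) (by positivity)
          _ = ε / 4 := by field_simp
        have h1 := key m (le_trans (le_max_right N1 N2) hm)
        have h2 := key n (le_trans (le_max_right N1 N2) hn)
        have h3 := hN1 m (le_trans (le_max_left N1 N2) hm) n (le_trans (le_max_left N1 N2) hn)
        rw [Real.dist_eq] at h3 ⊢
        have : f (zl (φ m) t) - f (zl (φ n) t) =
            (f (zl (φ m) t) - f (zl (φ m) (q k1))) +
            (f (zl (φ m) (q k1)) - f (zl (φ n) (q k1))) +
            (f (zl (φ n) (q k1)) - f (zl (φ n) t)) := by ring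
        rw [this]
        have habs : |(f (zl (φ m) t) - f (zl (φ m) (q k1))) +
              (f (zl (φ m) (q k1)) - f (zl (φ n) (q k1))) +
              (f (zl (φ n) (q k1)) - f (zl (φ n) t))| ≤
              |f (zl (φ m) t) - f (zl (φ m) (q k1))| +
              |f (zl (φ m) (q k1)) - f (zl (φ n) (q k1))| +
              |f (zl (φ n) (q k1)) - f (zl (φ n) t)| :=
          (abs_add_le _ _).trans (add_le_add (abs_add_le _ _) le_rfl)
        have h2' : |f (zl (φ n) (q k1)) - f (zl (φ n) t)| ≤ ε/4 := by
          rw [abs_sub_comm]; exact h2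
        have h3' : |f (zl (φ m) (q k1)) - f (zl (φ n) (q k1))| < ε/2 := by
          rw [← Real.dist_eq]; exact h3
        calc |(f (zl (φ m) t) - f (zl (φ m) (q k1))) +
              (f (zl (φ m) (q k1)) - f (zl (φ n) (q k1))) +
              (f (zl (φ n) (q k1)) - f (zl (φ n) t))| ≤ _ := habs
        _ < ε := by linarith
      obtain ⟨L, hL⟩ := cauchySeq_tendsto_of_complete hcauchy
      have hsubL : Tendsto (fun n => f (zl (φ (ψ n)) t)) atTop (𝓝 L) :=
        hL.comp hψ.tendsto_atTop
      have hsubx : Tendsto (fun n => f (zl (φ (ψ n)) t)) atTop (𝓝 (f x)) := hxconv f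
      rwa [tendsto_nhds_unique hsubL hsubx] at hL
  -- define the limit curve
  set zinf : ℝ → X := fun t => if h : t ∈ Icc (0:ℝ) T then Classical.choose (main t h) else 0
    with hzinfdef
  have hzconv : ∀ s ∈ Icc (0:ℝ) T, WeakConv (fun n => zl (φ n) s) (zinf s) := by
    intro s hs
    have : zinf s = Classical.choose (main s hs) := by rw [hzinfdef]; simp [hs]
    rw [this]
    exact Classical.choose_spec (main s hs)
  refine ⟨φ, hφ, zinf, hzconv, ?_⟩
  rw [diss_eq]
  refine iSup_le fun pt => ?_
  have hτmem : ∀ j ≤ pt.N, pt.τ j ∈ Icc (0:ℝ) T := fun j hj => hellyPtn_tau_mem pt hj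
  calc pt.sum D zinf
      ≤ ∑ j ∈ Finset.range pt.N,
          liminf (fun n => D (zl (φ n) (pt.τ j)) (zl (φ n) (pt.τ (j+1)))) atTop := by
        refine Finset.sum_le_sum fun j hj => ?_
        have hj' := Finset.mem_range.mp hj
        exact hDlsc _ _ _ _ (hzconv _ (hτmem j hj'.le)) (hzconv _ (hτmem (j+1) hj'))
  _ ≤ liminf (fun n => ∑ j ∈ Finset.range pt.N,
          D (zl (φ n) (pt.τ j)) (zl (φ n) (pt.τ (j+1)))) atTop :=
        ennreal_sum_liminf_le _ _
  _ ≤ liminf (fun n => Diss D (zl (φ n)) 0 T) atTop := by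
        refine liminf_le_liminf (Eventually.of_forall fun n => ?_)
        exact hellyPtn_sum_le_diss D (zl (φ n)) pt

end
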